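/- Let k be a natural number and let P, Q be complex polynomials with deg P ≤ k, deg Q ≤ k − 1, P having the same parity as k, Q having the same parity as k − 1, and satisfying |P(x)|² + (1 − x²)·|Q(x)|² = 1 for all x ∈ [−1, 1]. Then there exist real angles θ_0, θ_1, …, θ_k such that for all x ∈ [−1, 1], Z(θ_0) · ∏_{j=1}^{k} (W(x) · Z(θ_j)) = !![P(x), i·Q(x)·√(1−x²); i·conj(Q(x))·√(1−x²), conj(P(x))], where W(x) = !![x, i√(1−x²); i√(1−x²), x] and Z(θ) = !![e^{iθ}, 0; 0, e^{−iθ}]. In particular, the top-left entry of this product of single-qubit rotations realizes (block-encodes) the prescribed polynomial P(x). -/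

import Mathlib

open Complex Polynomial

/-- The QSP signal rotation `W(x)`. -/
noncomputable def qspW (x : ℝ) : Matrix (Fin 2) (Fin 2) ℂ :=
  !![(x : ℂ), Complex.I * Real.sqrt (1 - x ^ 2);
     Complex.I * Real.sqrt (1 - x ^ 2), (x : ℂ)]

/-- The z-rotation `Z(θ) = !![e^{iθ}, 0; 0, e^{-iθ}]`. -/
noncomputable def qspZ (θ : ℝ) : Matrix (Fin 2) (Fin 2) ℂ :=
  !![Complex.exp (Complex.I * θ), 0; 0, Complex.exp (-(Complex.I * θ))]

private lemma conj_eval (P : Polynomial ℂ) (x : ℝ) :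
    (starRingEnd ℂ) (P.eval (x : ℂ)) = (P.map (starRingEnd ℂ)).eval (x : ℂ) := by
  rw [Polynomial.eval_map]
  conv_rhs => rw [← Complex.conj_ofReal x]
  rw [Polynomial.eval₂_at_apply]

private lemma coeff_mul_of_bounds (A B : Polynomial ℂ) (a b : ℕ)
    (hA : ∀ n, a < n → A.coeff n = 0) (hB : ∀ n, b < n → B.coeff n = 0) :
    (A * B).coeff (a + b) = A.coeff a * B.coeff b := by
  rw [Polynomial.coeff_mul]
  apply Finset.sum_eq_single_of_mem (a, b) (Finset.HasAntidiagonal.mem_antidiagonal.mpr rfl)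
  rintro ⟨i, j⟩ hij hne
  rw [Finset.HasAntidiagonal.mem_antidiagonal] at hij
  rcases lt_or_ge a i with h | h
  · rw [hA i h, zero_mul]
  · have hij' : i ≠ a ∨ j ≠ b := by
      by_contra hc
      push_neg at hc
      exact hne (Prod.ext hc.1 hc.2)
    have : b < j := by omega
    rw [hB j this, mul_zero]

private lemma coeff_mul_zero_of_bounds (A B : Polynomial ℂ) (a b N : ℕ)
    (hA : ∀ n, a < n → A.coeff n = 0) (hB : ∀ n, b < n → B.coeff n = 0) (hN : a + b < N) :
    (A * B).coeff N = 0 := by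
  rw [Polynomial.coeff_mul]
  apply Finset.sum_eq_zero
  rintro ⟨i, j⟩ hij
  rw [Finset.HasAntidiagonal.mem_antidiagonal] at hij
  rcases lt_or_ge a i with h | h
  · rw [hA i h, zero_mul]
  · rw [hB j (by omega), mul_zero]

private lemma habs2 (z : ℂ) : ((‖z‖ : ℂ)) ^ 2 = z * (starRingEnd ℂ) z := by
  rw [← Complex.ofReal_pow, Complex.sq_norm, Complex.mul_conj]

set_option maxHeartbeats 2000000 in
/-- Quantum signal processing, angle-finding direction: given polynomials `P, Q` with
`deg P ≤ k`, `deg Q ≤ k-1`, `P` of the parity of `k`, `Q` of the parity of `k-1`, and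
`|P(x)|² + (1-x²)|Q(x)|² = 1` on `[-1,1]`, there exist angles `θ_0, …, θ_k` whose
alternating product of rotations block-encodes `P`. -/
theorem qsp_exists_angles (k : ℕ) (P Q : Polynomial ℂ)
    (hP : P.degree ≤ (k : ℕ)) (hQ : Q.degree < (k : ℕ))
    (hPpar : ∀ n : ℕ, P.coeff n ≠ 0 → n % 2 = k % 2)
    (hQpar : ∀ n : ℕ, Q.coeff n ≠ 0 → n % 2 = (k - 1) % 2)
    (hnorm : ∀ x : ℝ, -1 ≤ x → x ≤ 1 →
      ‖P.eval (x : ℂ)‖ ^ 2 +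
        (1 - x ^ 2) * ‖Q.eval (x : ℂ)‖ ^ 2 = 1) :
    ∃ θ : Fin (k + 1) → ℝ, ∀ x : ℝ, -1 ≤ x → x ≤ 1 →
      qspZ (θ 0) * (List.ofFn fun j : Fin k => qspW x * qspZ (θ j.succ)).prod =
        !![P.eval (x : ℂ), Complex.I * Q.eval (x : ℂ) * Real.sqrt (1 - x ^ 2);
           Complex.I * (starRingEnd ℂ) (Q.eval (x : ℂ)) * Real.sqrt (1 - x ^ 2),
           (starRingEnd ℂ) (P.eval (x : ℂ))] := by
  induction k generalizing P Q with
  | zero =>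
    -- Q = 0, P = C a with |a| = 1
    have hQ0 : Q = 0 := by
      apply Polynomial.ext; intro n
      have := (Polynomial.degree_lt_iff_coeff_zero Q 0).mp (by exact_mod_cast hQ)
      simpa using this n (by exact_mod_cast Nat.zero_le n)
    have hPC : P = Polynomial.C (P.coeff 0) := Polynomial.eq_C_of_degree_le_zero (by exact_mod_cast hP)
    set a := P.coeff 0 with ha
    have habs : ‖a‖ = 1 := by
      have h0 := hnorm 0 (by norm_num) (by norm_num)
      rw [hQ0, hPC] at h0
      simp at h0
      rcases h0 with h | h
      · exact h
      · nlinarith [norm_nonneg a]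
    refine ⟨fun _ => a.arg, ?_⟩
    intro x hx1 hx2
    have hae : Complex.exp (Complex.I * a.arg) = a := by
      conv_rhs => rw [← Complex.norm_mul_exp_arg_mul_I a]
      rw [habs, Complex.ofReal_one, one_mul, mul_comm]
    have hae' : Complex.exp (-(Complex.I * a.arg)) = (starRingEnd ℂ) a := by
      have h2 : (starRingEnd ℂ) (Complex.exp (Complex.I * a.arg)) = (starRingEnd ℂ) a :=
        congrArg _ hae
      rw [← h2, ← Complex.exp_conj, map_mul, Complex.conj_I, Complex.conj_ofReal]
      ring_nf
    rw [hPC, hQ0]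
    simp only [List.ofFn_zero, List.prod_nil, mul_one, qspZ]
    rw [hae, hae']
    ext i j
    fin_cases i <;> fin_cases j <;> simp
  | succ k ih =>
    simp only [Nat.add_sub_cancel] at hQpar
    have hPco : ∀ n, k + 1 < n → P.coeff n = 0 := by
      intro n hn
      exact (Polynomial.degree_le_iff_coeff_zero P _).mp hP n (by exact_mod_cast hn)
    have hQco : ∀ n, k + 1 ≤ n → Q.coeff n = 0 := by
      intro n hn
      exact (Polynomial.degree_lt_iff_coeff_zero Q _).mp hQ n (by exact_mod_cast hn)
    set Pc := P.map (starRingEnd ℂ) with hPc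
    set Qc := Q.map (starRingEnd ℂ) with hQc
    have hPcco : ∀ n, k + 1 < n → Pc.coeff n = 0 := by
      intro n hn; rw [hPc, Polynomial.coeff_map, hPco n hn, map_zero]
    have hQcco : ∀ n, k + 1 ≤ n → Qc.coeff n = 0 := by
      intro n hn; rw [hQc, Polynomial.coeff_map, hQco n hn, map_zero]
    -- polynomial identity
    have hzero : P * Pc + (1 - Polynomial.X ^ 2) * (Q * Qc) - 1 = 0 := by
      apply Polynomial.eq_zero_of_infinite_isRoot
      apply Set.Infinite.mono (s := (fun t : ℝ => (t : ℂ)) '' Set.Icc (-1) 1)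
      · rintro z ⟨x, hx, rfl⟩
        have h0 := hnorm x hx.1 hx.2
        rw [← Complex.ofReal_inj] at h0
        push_cast at h0
        rw [habs2, habs2] at h0
        simp only [Set.mem_setOf_eq, Polynomial.IsRoot, Polynomial.eval_sub,
          Polynomial.eval_add, Polynomial.eval_mul, Polynomial.eval_one,
          Polynomial.eval_pow, Polynomial.eval_X, hPc, hQc, ← conj_eval]
        linear_combination h0
      · exact Set.Infinite.image (fun x _ y _ h => Complex.ofReal_injective h)
          (Set.Icc_infinite (by norm_num : (-1 : ℝ) < 1))
    set p := P.coeff (k + 1) with hp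
    set q := Q.coeff k with hq'
    have hpq : p * (starRingEnd ℂ) p = q * (starRingEnd ℂ) q := by
      have h1 := congrArg (fun f => Polynomial.coeff f (2 * k + 2)) hzero
      simp only [Polynomial.coeff_sub, Polynomial.coeff_add, Polynomial.coeff_zero] at h1
      have e1 : (P * Pc).coeff (2 * k + 2) = p * (starRingEnd ℂ) p := by
        have := coeff_mul_of_bounds P Pc (k + 1) (k + 1) hPco hPcco
        rw [show k + 1 + (k + 1) = 2 * k + 2 by ring] at this
        rw [this, hPc, Polynomial.coeff_map]
      have e2 : ((1 - Polynomial.X ^ 2) * (Q * Qc)).coeff (2 * k + 2) = -(q * (starRingEnd ℂ) q) := by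
        have hr : (1 - Polynomial.X ^ 2) * (Q * Qc) = Q * Qc - (Q * Qc) * Polynomial.X ^ 2 := by ring
        rw [hr, Polynomial.coeff_sub]
        have e3 : (Q * Qc).coeff (2 * k + 2) = 0 :=
          coeff_mul_zero_of_bounds Q Qc k k (2 * k + 2)
            (fun n hn => hQco n hn) (fun n hn => hQcco n hn) (by omega)
        have e4 : ((Q * Qc) * Polynomial.X ^ 2).coeff (2 * k + 2) = q * (starRingEnd ℂ) q := by
          rw [Polynomial.coeff_mul_X_pow']
          rw [if_pos (by omega)]
          have := coeff_mul_of_bounds Q Qc k k (fun n hn => hQco n hn) (fun n hn => hQcco n hn)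
          rw [show (2 * k + 2 - 2) = k + k by omega, this, hQc, Polynomial.coeff_map]
        rw [e3, e4]; ring
      have e5 : (1 : Polynomial ℂ).coeff (2 * k + 2) = 0 := by
        simp [Polynomial.coeff_one]
      rw [e1, e2, e5] at h1
      linear_combination h1
    -- choose the last angle
    have hkey : ∃ θl : ℝ, (starRingEnd ℂ) (Complex.exp (Complex.I * θl)) * p
        = Complex.exp (Complex.I * θl) * q := by
      by_cases hq0 : q = 0
      · have hp0 : p = 0 := by
          have : Complex.normSq p = Complex.normSq q := by
            have := hpq
            rw [Complex.mul_conj, Complex.mul_conj] at this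
            exact_mod_cast this
          rw [hq0] at this; simp at this
          exact this
        exact ⟨0, by rw [hp0, hq0, mul_zero, mul_zero]⟩
      · have habsu : ‖p / q‖ = 1 := by
          have hab : ‖p‖ = ‖q‖ := by
            have : Complex.normSq p = Complex.normSq q := by
              have := hpq
              rw [Complex.mul_conj, Complex.mul_conj] at this
              exact_mod_cast this
            rw [Complex.norm_def, Complex.norm_def, this]
          rw [norm_div, hab, div_self (by simpa using hq0)]
        refine ⟨(p / q).arg / 2, ?_⟩
        set c := Complex.exp (Complex.I * ((p / q).arg / 2 : ℝ)) with hc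
        have hcc : c * c = p / q := by
          rw [hc, ← Complex.exp_add]
          have : Complex.I * ((((p / q).arg / 2 : ℝ)) : ℂ) + Complex.I * ((((p / q).arg / 2 : ℝ)) : ℂ)
              = ((p / q).arg : ℂ) * Complex.I := by
            push_cast; ring
          rw [this]
          conv_rhs => rw [← Complex.norm_mul_exp_arg_mul_I (p / q)]
          rw [habsu, Complex.ofReal_one, one_mul]
        have hcd : c * (starRingEnd ℂ) c = 1 := by
          rw [Complex.mul_conj]
          have : ‖c‖ = 1 := by
            rw [hc, Complex.norm_exp]
            simp
          rw [← Complex.sq_norm, this]; simp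
        have hpcq : p = c * c * q := by
          rw [hcc, div_mul_cancel₀ _ hq0]
        rw [hpcq]
        calc (starRingEnd ℂ) c * (c * c * q) = (c * (starRingEnd ℂ) c) * (c * q) := by ring
        _ = c * q := by rw [hcd, one_mul]
    obtain ⟨θl, hkeyl⟩ := hkey
    set c := Complex.exp (Complex.I * θl) with hcdef
    set d := (starRingEnd ℂ) c with hddef
    have hcd : c * d = 1 := by
      rw [hddef, Complex.mul_conj]
      have : ‖c‖ = 1 := by rw [hcdef, Complex.norm_exp]; simp
      rw [← Complex.sq_norm, this]; simp
    have hdc : (starRingEnd ℂ) d = c := by rw [hddef, Complex.conj_conj]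
    -- reduced polynomials
    set Pt := Polynomial.C d * (P * Polynomial.X) + Polynomial.C c * (Q - Q * Polynomial.X ^ 2) with hPt
    set Qt := Polynomial.C c * (Q * Polynomial.X) - Polynomial.C d * P with hQt
    have hPtc : ∀ n, Pt.coeff n
        = d * (if 1 ≤ n then P.coeff (n - 1) else 0)
          + c * (Q.coeff n - if 2 ≤ n then Q.coeff (n - 2) else 0) := by
      intro n
      rw [hPt, Polynomial.coeff_add, Polynomial.coeff_C_mul, Polynomial.coeff_C_mul,
        Polynomial.coeff_sub]
      rw [show (P * Polynomial.X) = P * Polynomial.X ^ 1 by ring]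
      rw [Polynomial.coeff_mul_X_pow', Polynomial.coeff_mul_X_pow']
    have hQtc : ∀ n, Qt.coeff n
        = c * (if 1 ≤ n then Q.coeff (n - 1) else 0) - d * P.coeff n := by
      intro n
      rw [hQt, Polynomial.coeff_sub, Polynomial.coeff_C_mul, Polynomial.coeff_C_mul]
      rw [show (Q * Polynomial.X) = Q * Polynomial.X ^ 1 by ring]
      rw [Polynomial.coeff_mul_X_pow']
    have hPtco : ∀ n, k < n → Pt.coeff n = 0 := by
      intro n hn
      rw [hPtc n]
      rcases Nat.lt_or_ge n (k + 2) with h | h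
      · -- n = k + 1
        have hn1 : n = k + 1 := by omega
        rw [hn1]
        have hPk : P.coeff k = 0 := by
          by_contra hcne; have := hPpar k hcne; omega
        have hQk1 : Q.coeff (k + 1) = 0 := hQco _ le_rfl
        have hQk2 : (if 2 ≤ k + 1 then Q.coeff (k + 1 - 2) else 0) = 0 := by
          split
          · next h2 =>
            by_contra hcne
            have := hQpar _ hcne
            omega
          · rfl
        rw [if_pos (by omega)]
        simp only [Nat.add_sub_cancel, hPk, hQk1, hQk2]
        ring
      · rcases Nat.lt_or_ge n (k + 3) with h' | h'
        · -- n = k + 2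
          have hn2 : n = k + 2 := by omega
          rw [hn2, if_pos (by omega), if_pos (by omega)]
          have hQk2' : Q.coeff (k + 2) = 0 := hQco _ (by omega)
          simp only [Nat.add_sub_cancel, hQk2', show k + 2 - 1 = k + 1 by omega,
            show k + 2 - 2 = k by omega]
          rw [← hp, ← hq']
          linear_combination hkeyl
        · -- n ≥ k + 3
          rw [if_pos (by omega), if_pos (by omega)]
          rw [hPco (n - 1) (by omega), hQco n (by omega), hQco (n - 2) (by omega)]
          ring
    have hQtco : ∀ n, k ≤ n → Qt.coeff n = 0 := by
      intro n hn
      rw [hQtc n]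
      rcases Nat.lt_or_ge n (k + 1) with h | h
      · -- n = k
        have hn1 : n = k := by omega
        rw [hn1]
        have hPk : P.coeff k = 0 := by
          by_contra hcne; have := hPpar k hcne; omega
        have hQk : (if 1 ≤ k then Q.coeff (k - 1) else 0) = 0 := by
          split
          · next h1 =>
            by_contra hcne
            have := hQpar _ hcne
            omega
          · rfl
        rw [hQk, hPk]; ring
      · rcases Nat.lt_or_ge n (k + 2) with h' | h'
        · -- n = k + 1
          have hn2 : n = k + 1 := by omega
          rw [hn2, if_pos (by omega)]
          simp only [Nat.add_sub_cancel]
          rw [← hp, ← hq']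
          linear_combination - hkeyl
        · rw [if_pos (by omega)]
          rw [hQco (n - 1) (by omega), hPco n (by omega)]
          ring
    have hPtpar : ∀ n, Pt.coeff n ≠ 0 → n % 2 = k % 2 := by
      intro n hne
      by_contra hpar
      apply hne
      rw [hPtc n]
      have h1 : (if 1 ≤ n then P.coeff (n - 1) else 0) = 0 := by
        split
        · next hh =>
          by_contra hcne; have := hPpar _ hcne; omega
        · rfl
      have h2 : Q.coeff n = 0 := by
        by_contra hcne; have := hQpar _ hcne; omega
      have h3 : (if 2 ≤ n then Q.coeff (n - 2) else 0) = 0 := by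
        split
        · next hh =>
          by_contra hcne; have := hQpar _ hcne; omega
        · rfl
      rw [h1, h2, h3]; ring
    have hQtpar : ∀ n, Qt.coeff n ≠ 0 → n % 2 = (k - 1) % 2 := by
      intro n hne
      rcases Nat.eq_zero_or_pos k with hk0 | hkpos
      · exact absurd (hQtco n (by omega)) hne
      · by_contra hpar
        apply hne
        rw [hQtc n]
        have h1 : (if 1 ≤ n then Q.coeff (n - 1) else 0) = 0 := by
          split
          · next hh =>
            by_contra hcne; have := hQpar _ hcne; omega
          · rfl
        have h2 : P.coeff n = 0 := by
          by_contra hcne; have := hPpar _ hcne; omega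
        rw [h1, h2]; ring
    have hPtdeg : Pt.degree ≤ (k : ℕ) := by
      rw [Polynomial.degree_le_iff_coeff_zero]
      intro m hm
      exact hPtco m (by exact_mod_cast hm)
    have hQtdeg : Qt.degree < (k : ℕ) := by
      rw [Polynomial.degree_lt_iff_coeff_zero]
      intro m hm
      exact hQtco m (by exact_mod_cast hm)
    have hnormt : ∀ x : ℝ, -1 ≤ x → x ≤ 1 →
        ‖Pt.eval (x : ℂ)‖ ^ 2 +
          (1 - x ^ 2) * ‖Qt.eval (x : ℂ)‖ ^ 2 = 1 := by
      intro x hx1 hx2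
      have h0 := hnorm x hx1 hx2
      rw [← Complex.ofReal_inj] at h0 ⊢
      push_cast at h0 ⊢
      rw [habs2, habs2] at h0 ⊢
      have ePt : Pt.eval (x : ℂ) = d * (P.eval (x : ℂ) * x) + c * (Q.eval (x : ℂ) - Q.eval (x : ℂ) * (x : ℂ) ^ 2) := by
        simp [hPt]
      have eQt : Qt.eval (x : ℂ) = c * (Q.eval (x : ℂ) * x) - d * P.eval (x : ℂ) := by
        simp [hQt]
      have ePt' : (starRingEnd ℂ) (Pt.eval (x : ℂ))
          = c * ((starRingEnd ℂ) (P.eval (x : ℂ)) * x)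
            + d * ((starRingEnd ℂ) (Q.eval (x : ℂ)) - (starRingEnd ℂ) (Q.eval (x : ℂ)) * (x : ℂ) ^ 2) := by
        rw [ePt]
        simp only [map_add, map_mul, map_sub, map_pow, Complex.conj_ofReal, hdc, ← hddef]
      have eQt' : (starRingEnd ℂ) (Qt.eval (x : ℂ))
          = d * ((starRingEnd ℂ) (Q.eval (x : ℂ)) * x) - c * (starRingEnd ℂ) (P.eval (x : ℂ)) := by
        rw [eQt]
        simp only [map_sub, map_mul, Complex.conj_ofReal, hdc, ← hddef]
      rw [ePt', eQt', ePt, eQt]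
      linear_combination (c * d) * h0 + hcd
    obtain ⟨θ', hθ'⟩ := ih Pt Qt hPtdeg hQtdeg hPtpar hQtpar hnormt
    refine ⟨Fin.snoc θ' θl, ?_⟩
    intro x hx1 hx2
    have h0' : (Fin.snoc θ' θl : Fin (k + 2) → ℝ) 0 = θ' 0 := by
      rw [show (0 : Fin (k + 2)) = Fin.castSucc (0 : Fin (k + 1)) by rfl, Fin.snoc_castSucc]
    have hlist : (List.ofFn fun j : Fin (k + 1) =>
          qspW x * qspZ ((Fin.snoc θ' θl : Fin (k + 2) → ℝ) j.succ)).prod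
        = (List.ofFn fun j : Fin k => qspW x * qspZ (θ' j.succ)).prod * (qspW x * qspZ θl) := by
      simp only [List.ofFn_succ', List.prod_concat, Fin.succ_castSucc, Fin.snoc_castSucc,
        Fin.succ_last, Fin.snoc_last]
    rw [h0', hlist, ← mul_assoc, hθ' x hx1 hx2]
    have hs : ((Real.sqrt (1 - x ^ 2) : ℝ) : ℂ) * ((Real.sqrt (1 - x ^ 2) : ℝ) : ℂ)
        = 1 - (x : ℂ) ^ 2 := by
      rw [← Complex.ofReal_mul, Real.mul_self_sqrt (by nlinarith)]
      push_cast; ring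
    have ePt : Pt.eval (x : ℂ) = d * (P.eval (x : ℂ) * x) + c * (Q.eval (x : ℂ) - Q.eval (x : ℂ) * (x : ℂ) ^ 2) := by
      simp [hPt]
    have eQt : Qt.eval (x : ℂ) = c * (Q.eval (x : ℂ) * x) - d * P.eval (x : ℂ) := by
      simp [hQt]
    have ePt' : (starRingEnd ℂ) (Pt.eval (x : ℂ))
        = c * ((starRingEnd ℂ) (P.eval (x : ℂ)) * x)
          + d * ((starRingEnd ℂ) (Q.eval (x : ℂ)) - (starRingEnd ℂ) (Q.eval (x : ℂ)) * (x : ℂ) ^ 2) := by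
      rw [ePt]
      simp only [map_add, map_mul, map_sub, map_pow, Complex.conj_ofReal, hdc, ← hddef]
    have eQt' : (starRingEnd ℂ) (Qt.eval (x : ℂ))
        = d * ((starRingEnd ℂ) (Q.eval (x : ℂ)) * x) - c * (starRingEnd ℂ) (P.eval (x : ℂ)) := by
      rw [eQt]
      simp only [map_sub, map_mul, Complex.conj_ofReal, hdc, ← hddef]
    have hexp1 : Complex.exp (Complex.I * (θl : ℂ)) = c := rfl
    have hexp2 : Complex.exp (-(Complex.I * (θl : ℂ))) = d := by
      rw [hddef, hcdef, ← Complex.exp_conj]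
      congr 1
      simp [Complex.conj_ofReal]
    rw [qspW, qspZ, Matrix.mul_fin_two, Matrix.mul_fin_two]
    ext i j
    fin_cases i <;> fin_cases j <;>
      simp only [Matrix.of_apply, Fin.mk_zero, Fin.mk_one, Matrix.cons_val', Matrix.cons_val_zero,
        Matrix.cons_val_one, Matrix.head_cons, Matrix.empty_val', Matrix.cons_val_fin_one,
        Matrix.head_fin_const, Fin.isValue] <;>
      (try rw [hexp2]) <;> (try rw [ePt', eQt']) <;> (try rw [ePt, eQt])
    · linear_combination P.eval (x : ℂ) * hcd
        - (c * (c * (Q.eval (x : ℂ) * x) - d * P.eval (x : ℂ))) * hs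
        + (((Real.sqrt (1 - x ^ 2) : ℝ) : ℂ) ^ 2
            * ((x : ℂ) * c ^ 2 * Q.eval (x : ℂ) - d * c * P.eval (x : ℂ))) * Complex.I_sq
    · linear_combination (Complex.I * ((Real.sqrt (1 - x ^ 2) : ℝ) : ℂ) * Q.eval (x : ℂ)) * hcd
    · linear_combination (Complex.I * ((Real.sqrt (1 - x ^ 2) : ℝ) : ℂ) * (starRingEnd ℂ) (Q.eval (x : ℂ))) * hcd
    · linear_combination (starRingEnd ℂ) (P.eval (x : ℂ)) * hcd
        - (d * (d * ((starRingEnd ℂ) (Q.eval (x : ℂ)) * x) - c * (starRingEnd ℂ) (P.eval (x : ℂ)))) * hs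
        + (((Real.sqrt (1 - x ^ 2) : ℝ) : ℂ) ^ 2
            * (d ^ 2 * (starRingEnd ℂ) (Q.eval (x : ℂ)) * (x : ℂ)
               - d * c * (starRingEnd ℂ) (P.eval (x : ℂ)))) * Complex.I_sq
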